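/- Let K be the Klein bottle group, realized as the semidirect product ℤ ⋊ ℤ in which the generator of the second factor acts on ℤ by negation, and set a = (1, 0). Then the centralizer Z({a}) has index 2 in K. Consequently (taking S = ∅ and S' = {a}, so that Z(S) = K) the group K is not principal. -/

import Mathlib

/-- The action of the generator of the second `ℤ` factor on the first: the
nontrivial automorphism (negation, written multiplicatively as inversion). -/
def kleinAction : Multiplicative ℤ →* MulAut (Multiplicative ℤ) :=
  zpowersHom (MulAut (Multiplicative ℤ)) (MulEquiv.inv (Multiplicative ℤ))

/-- The Klein bottle group `K = ⟨a, b | b a b⁻¹ = a⁻¹⟩`, realized as the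
semidirect product `ℤ ⋊ ℤ` in which the generator of the second factor acts on
`ℤ` by negation. -/
abbrev KleinBottleGroup : Type :=
  SemidirectProduct (Multiplicative ℤ) (Multiplicative ℤ) kleinAction

/-- The element `a = (1, 0)` of the Klein bottle group. -/
def kleinA : KleinBottleGroup := SemidirectProduct.inl (Multiplicative.ofAdd (1 : ℤ))

/-- In the Klein bottle group, the centralizer `Z({a})` has index `2`;
consequently (taking `S = ∅` and `S' = {a}`, so that `Z(S) = K`) the Klein
bottle group is not principal (infinite index is encoded by relative index
`0`). -/
lemma inv_sq' : (MulEquiv.inv (Multiplicative ℤ))^(2:ℤ) = 1 := by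
  ext x; simp [zpow_two, pow_two]

lemma kleinAction_fix_iff (n : ℤ) :
    ((MulEquiv.inv (Multiplicative ℤ)) ^ n : MulAut (Multiplicative ℤ))
      (Multiplicative.ofAdd 1) = Multiplicative.ofAdd 1 ↔ Even n := by
  rcases Int.even_or_odd n with ⟨k, hk⟩ | ⟨k, hk⟩
  · subst hk
    rw [show k + k = 2 * k by ring, zpow_mul, inv_sq', one_zpow]
    simp [parity_simps]
  · subst hk
    rw [zpow_add, zpow_mul, inv_sq', one_zpow]
    simp only [one_mul, zpow_one]
    constructor
    · intro h
      exfalso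
      simpa using congrArg Multiplicative.toAdd h
    · intro h
      exact absurd h (by simp [Int.even_add_one, parity_simps])

def kleinPhi : KleinBottleGroup →* Multiplicative (ZMod 2) :=
  (AddMonoidHom.toMultiplicative (Int.castAddHom (ZMod 2))).comp
    SemidirectProduct.rightHom

lemma centralizer_eq_ker :
    Subgroup.centralizer {kleinA} = kleinPhi.ker := by
  ext x
  rw [Subgroup.mem_centralizer_iff, MonoidHom.mem_ker]
  simp only [Set.mem_singleton_iff, forall_eq]
  constructor
  · intro h
    have h1 : (kleinA * x).left = (x * kleinA).left := by rw [h]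
    simp only [SemidirectProduct.mul_left, kleinA, SemidirectProduct.left_inl,
      SemidirectProduct.right_inl, map_one, MulAut.one_apply, one_mul] at h1
    have h2 : kleinAction x.right (Multiplicative.ofAdd 1) = Multiplicative.ofAdd 1 := by
      rw [mul_comm (Multiplicative.ofAdd 1) x.left] at h1
      exact (mul_left_cancel h1).symm
    have h3 : Even (Multiplicative.toAdd x.right) := by
      rw [← kleinAction_fix_iff]
      simpa [kleinAction, zpowersHom_apply] using h2
    have : ((Multiplicative.toAdd x.right : ℤ) : ZMod 2) = 0 := by
      rw [ZMod.intCast_zmod_eq_zero_iff_dvd]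
      exact h3.two_dvd
    simp only [kleinPhi, MonoidHom.comp_apply]
    exact congrArg Multiplicative.ofAdd this
  · intro h
    have h0 : ((Multiplicative.toAdd x.right : ℤ) : ZMod 2) = 0 := by
      have := congrArg Multiplicative.toAdd h
      simpa [kleinPhi] using this
    have h3 : Even (Multiplicative.toAdd x.right) := by
      obtain ⟨k, hk⟩ := (ZMod.intCast_zmod_eq_zero_iff_dvd _ _).1 h0
      exact ⟨k, by omega⟩
    have h2 : kleinAction x.right (Multiplicative.ofAdd 1) = Multiplicative.ofAdd 1 := by
      have := (kleinAction_fix_iff (Multiplicative.toAdd x.right)).2 h3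
      simpa [kleinAction, zpowersHom_apply] using this
    ext
    · simp [kleinA, h2, mul_comm]
    · simp [kleinA]

lemma phi_surj : Function.Surjective kleinPhi := by
  intro y
  obtain ⟨n, hn⟩ := ZMod.intCast_surjective (Multiplicative.toAdd y)
  refine ⟨SemidirectProduct.inr (Multiplicative.ofAdd n), ?_⟩
  simp only [kleinPhi, MonoidHom.comp_apply, SemidirectProduct.rightHom_inr]
  exact Multiplicative.toAdd.injective (by simpa using hn)

lemma index_two : (Subgroup.centralizer {kleinA}).index = 2 := by
  rw [centralizer_eq_ker]
  rw [Subgroup.index_ker, MonoidHom.range_eq_top.2 phi_surj]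
  rw [Nat.card_congr Subgroup.topEquiv.toEquiv]
  simp [Nat.card_eq_fintype_card]

theorem stmt10 :
    (Subgroup.centralizer {kleinA}).index = 2 ∧
    ¬ (∀ S S' : Finset KleinBottleGroup,
        (Subgroup.centralizer (S : Set KleinBottleGroup) ⊓
            Subgroup.centralizer (S' : Set KleinBottleGroup)).relIndex
          (Subgroup.centralizer (S : Set KleinBottleGroup)) = 1 ∨
        (Subgroup.centralizer (S : Set KleinBottleGroup) ⊓
            Subgroup.centralizer (S' : Set KleinBottleGroup)).relIndex
          (Subgroup.centralizer (S : Set KleinBottleGroup)) = 0) := by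
  refine ⟨index_two, fun h => ?_⟩
  have h0 : Subgroup.centralizer (((∅ : Finset KleinBottleGroup) : Set KleinBottleGroup)) = ⊤ := by
    ext x; simp [Subgroup.mem_centralizer_iff]
  have := h ∅ {kleinA}
  rw [h0, top_inf_eq, Subgroup.relIndex_top_right, Finset.coe_singleton, index_two] at this
  omega
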